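/- In the sequential Setchain state machine, in every reachable state the sets history(1), ..., history(epoch) are pairwise disjoint. -/
import Mathlib


structure SCState (E : Type*) where
  theset : Set E
  history : ℕ → Set E
  epoch : ℕ

def SCInit (E : Type*) : SCState E := ⟨∅, fun _ => ∅, 0⟩

inductive SCStep (E : Type*) : SCState E → SCState E → Prop
  | add (s : SCState E) (e : E) :
      SCStep E s ⟨s.theset ∪ {e}, s.history, s.epoch⟩
  | epochInc (s : SCState E) (E' : Set E)
      (hE' : E' ⊆ s.theset \ ⋃ k ≤ s.epoch, s.history k) :
      SCStep E s
        ⟨s.theset, Function.update s.history (s.epoch + 1) E', s.epoch + 1⟩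

def SCReachable {E : Type*} (s : SCState E) : Prop :=
  Relation.ReflTransGen (SCStep E) (SCInit E) s

theorem unique_epoch_invariant {E : Type*} (s : SCState E)
    (hs : SCReachable s) :
    ∀ i j, 1 ≤ i → i ≤ s.epoch → 1 ≤ j → j ≤ s.epoch → i ≠ j →
      s.history i ∩ s.history j = ∅ := by
  induction hs with
  | refl => intro i j h1 h2; simp [SCInit] at h2; omega
  | @tail b c hab hbc ih =>
    cases hbc with
    | add e => exact ih
    | epochInc E'' hE'' =>
      intro i j hi1 hi2 hj1 hj2 hij
      dsimp only at hi2 hj2 ⊢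
      have key : ∀ k, 1 ≤ k → k ≤ b.epoch →
          E'' ∩ b.history k = ∅ := by
        intro k hk1 hk2
        rw [Set.eq_empty_iff_forall_notMem]
        rintro x ⟨hxE, hxk⟩
        exact (hE'' hxE).2 (Set.mem_biUnion hk2 hxk)
      rcases eq_or_lt_of_le hi2 with hie | hie
      · have hj : j ≤ b.epoch := by omega
        rw [hie, Function.update_self,
          Function.update_of_ne (by omega : j ≠ b.epoch + 1)]
        exact key j hj1 hj
      · rcases eq_or_lt_of_le hj2 with hje | hje
        · have hi : i ≤ b.epoch := by omega
          rw [hje, Function.update_self,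
            Function.update_of_ne (by omega : i ≠ b.epoch + 1)]
          rw [Set.inter_comm]; exact key i hi1 hi
        · rw [Function.update_of_ne (by omega : i ≠ b.epoch + 1),
            Function.update_of_ne (by omega : j ≠ b.epoch + 1)]
          exact ih i j hi1 (by omega) hj1 (by omega) hij
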